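/- arXiv:1312.6901 — 3 statements merged into one kernel-verified Lean document; each statement's English description precedes it below -/
import Mathlib

section
/- Let K ⊆ ℝ be an open set and let Ψₙ (n = 1, 2, …) and Ψ be continuous, strictly increasing real-valued functions on K such that Ψₙ(x) → Ψ(x) as n → ∞ for every x ∈ K. Suppose yₙ belongs to the range of Ψₙ for each n, y belongs to the range of Ψ, and yₙ → y. Then the (unique) preimages converge: Ψₙ⁻¹(yₙ) → Ψ⁻¹(y), i.e. the points xₙ ∈ K with Ψₙ(xₙ) = yₙ converge to the point x ∈ K with Ψ(x) = y. -/
open Filter Topology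

/-- If continuous strictly increasing functions `Ψₙ` on an open set `K ⊆ ℝ` converge
pointwise to a continuous strictly increasing function `Ψ`, `Ψₙ xₙ = yₙ`, `Ψ x = y`
and `yₙ → y`, then the preimages converge: `xₙ → x`. -/
theorem inverse_convergence_of_strictMono
    (K : Set ℝ) (hK : IsOpen K)
    (Ψ : ℕ → ℝ → ℝ) (Ψlim : ℝ → ℝ)
    (hcont : ∀ n, ContinuousOn (Ψ n) K)
    (hmono : ∀ n, StrictMonoOn (Ψ n) K)
    (hcontlim : ContinuousOn Ψlim K)
    (hmonolim : StrictMonoOn Ψlim K)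
    (hconv : ∀ z ∈ K, Tendsto (fun n => Ψ n z) atTop (𝓝 (Ψlim z)))
    (x : ℕ → ℝ) (hxK : ∀ n, x n ∈ K)
    (xlim : ℝ) (hxlimK : xlim ∈ K)
    (y : ℕ → ℝ) (hy : ∀ n, Ψ n (x n) = y n)
    (ylim : ℝ) (hylim : Ψlim xlim = ylim)
    (hyconv : Tendsto y atTop (𝓝 ylim)) :
    Tendsto x atTop (𝓝 xlim) := by
  obtain ⟨δ, hδ, hball⟩ := Metric.isOpen_iff.1 hK xlim hxlimK
  rw [tendsto_order]
  constructor
  · intro a' ha'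
    set a := max a' (xlim - δ / 2) with hadef
    have haxlim : a < xlim := max_lt ha' (by linarith)
    have haK : a ∈ K := by
      apply hball
      rw [Real.ball_eq_Ioo]
      constructor
      · have : xlim - δ / 2 ≤ a := le_max_right _ _
        linarith
      · linarith
    have hlt : Ψlim a < ylim := hylim ▸ hmonolim haK hxlimK haxlim
    have hev : ∀ᶠ n in atTop, Ψ n a < y n :=
      (hconv a haK).eventually_lt hyconv hlt
    filter_upwards [hev] with n hn
    have : a < x n := by
      rw [← (hmono n).lt_iff_lt haK (hxK n)]
      rw [hy n]; exact hn
    exact lt_of_le_of_lt (le_max_left _ _) this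
  · intro b' hb'
    set b := min b' (xlim + δ / 2) with hbdef
    have hbxlim : xlim < b := lt_min hb' (by linarith)
    have hbK : b ∈ K := by
      apply hball
      rw [Real.ball_eq_Ioo]
      constructor
      · linarith
      · have : b ≤ xlim + δ / 2 := min_le_right _ _
        linarith
    have hlt : ylim < Ψlim b := hylim ▸ hmonolim hxlimK hbK hbxlim
    have hev : ∀ᶠ n in atTop, y n < Ψ n b :=
      hyconv.eventually_lt (hconv b hbK) hlt
    filter_upwards [hev] with n hn
    have : x n < b := by
      rw [← (hmono n).lt_iff_lt (hxK n) hbK]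
      rw [hy n]; exact hn
    exact lt_of_lt_of_le this (min_le_left _ _)
end

section
/- For all integers n, n' and every real β, Re ∫₀¹ (e^{2i((n+1)π−β)s} − e^{2i(nπ−β)s})·(e^{−2i((n'+1)π−β)s} − e^{−2i(n'π−β)s}) ds = (1/π)·∫₀^{2π} cos((n−n')θ)·(1 − cos θ) dθ. In particular the left-hand side does not depend on β and equals 2 if n = n', −1 if |n − n'| = 1, and 0 if |n − n'| ≥ 2. -/
open intervalIntegral Real Complex

lemma Jlem (k : ℤ) : (∫ s in (0:ℝ)..1, Complex.exp (2 * Real.pi * Complex.I * k * s))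
    = if k = 0 then 1 else 0 := by
  by_cases hk : k = 0
  · simp [hk]
  · rw [if_neg hk]
    have hc : (2 * (Real.pi:ℂ) * Complex.I * k) ≠ 0 := by
      simp [Real.pi_ne_zero, Complex.I_ne_zero, hk]
    rw [integral_exp_mul_complex hc]
    have h1 : Complex.exp (2 * (Real.pi:ℂ) * Complex.I * k * 1) = 1 := by
      rw [mul_one]
      have := Complex.exp_int_mul_two_pi_mul_I k
      rw [← this]; ring_nf
    rw [Complex.ofReal_one, Complex.ofReal_zero, h1, mul_zero, Complex.exp_zero, sub_self,
      zero_div]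

lemma Klem (k : ℤ) : (∫ θ in (0:ℝ)..(2*Real.pi), Real.cos (k * θ))
    = if k = 0 then 2 * Real.pi else 0 := by
  by_cases hk : k = 0
  · simp [hk]
  · rw [if_neg hk]
    have hc : (k:ℝ) ≠ 0 := Int.cast_ne_zero.mpr hk
    rw [intervalIntegral.integral_comp_mul_left (fun x => Real.cos x) hc]
    have h1 : Real.sin ((k:ℝ) * (2 * Real.pi)) = 0 := by
      have : (k:ℝ) * (2 * Real.pi) = 2 * k * Real.pi := by ring
      rw [this]
      exact_mod_cast Real.sin_int_mul_pi (2 * k)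
    simp [integral_cos, h1]

lemma LHS_eq (n n' : ℤ) (β : ℝ) :
    (∫ s in (0:ℝ)..1,
        (Complex.exp (2 * Complex.I * (((n : ℂ) + 1) * Real.pi - (β : ℂ)) * (s : ℂ))
          - Complex.exp (2 * Complex.I * ((n : ℂ) * Real.pi - (β : ℂ)) * (s : ℂ)))
        * (Complex.exp (-2 * Complex.I * (((n' : ℂ) + 1) * Real.pi - (β : ℂ)) * (s : ℂ))
          - Complex.exp (-2 * Complex.I * ((n' : ℂ) * Real.pi - (β : ℂ)) * (s : ℂ)))).re
      = (if n - n' = 0 then (2:ℝ) else if (n - n').natAbs = 1 then -1 else 0) := by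
  set m := n - n' with hm
  have key : ∀ s : ℝ,
      (Complex.exp (2 * Complex.I * (((n : ℂ) + 1) * Real.pi - (β : ℂ)) * (s : ℂ))
          - Complex.exp (2 * Complex.I * ((n : ℂ) * Real.pi - (β : ℂ)) * (s : ℂ)))
        * (Complex.exp (-2 * Complex.I * (((n' : ℂ) + 1) * Real.pi - (β : ℂ)) * (s : ℂ))
          - Complex.exp (-2 * Complex.I * ((n' : ℂ) * Real.pi - (β : ℂ)) * (s : ℂ)))
      = (Complex.exp (2 * Real.pi * Complex.I * (m:ℤ) * s)
          - Complex.exp (2 * Real.pi * Complex.I * ((m+1:ℤ)) * s))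
        - (Complex.exp (2 * Real.pi * Complex.I * ((m-1:ℤ)) * s)
          - Complex.exp (2 * Real.pi * Complex.I * (m:ℤ) * s)) := by
    intro s
    have expand : ∀ a b c d : ℂ, (Complex.exp a - Complex.exp b) *
        (Complex.exp c - Complex.exp d)
        = Complex.exp (a+c) - Complex.exp (a+d) - (Complex.exp (b+c) - Complex.exp (b+d)) := by
      intros a b c d; simp only [Complex.exp_add]; ring
    rw [expand]
    push_cast [hm]
    ring_nf
  have hint : ∀ k : ℤ, IntervalIntegrable
      (fun s : ℝ => Complex.exp (2 * Real.pi * Complex.I * k * s)) MeasureTheory.volume 0 1 := by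
    intro k
    exact (Continuous.cexp (by fun_prop)).intervalIntegrable 0 1
  simp only [key]
  rw [intervalIntegral.integral_sub ((hint m).sub (hint (m+1))) ((hint (m-1)).sub (hint m)),
    intervalIntegral.integral_sub (hint m) (hint (m+1)),
    intervalIntegral.integral_sub (hint (m-1)) (hint m), Jlem, Jlem, Jlem]
  rcases lt_trichotomy m 0 with h | h | h
  · rcases eq_or_lt_of_le (show m ≤ -1 by omega) with h1 | h1
    · rw [h1]; norm_num
    · have h0 : m ≠ 0 := by omega
      have h2 : m + 1 ≠ 0 := by omega
      have h3 : m - 1 ≠ 0 := by omega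
      have h4 : m.natAbs ≠ 1 := by omega
      simp [h0, h2, h3, h4]
  · simp [h]; norm_num
  · rcases eq_or_lt_of_le (show 1 ≤ m by omega) with h1 | h1
    · rw [← h1]; norm_num
    · have h0 : m ≠ 0 := by omega
      have h2 : m + 1 ≠ 0 := by omega
      have h3 : m - 1 ≠ 0 := by omega
      have h4 : m.natAbs ≠ 1 := by omega
      simp [h0, h2, h3, h4]

lemma RHS_eq (n n' : ℤ) :
    (1 / Real.pi) * ∫ θ in (0:ℝ)..(2 * Real.pi), Real.cos ((n - n') * θ) * (1 - Real.cos θ)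
    = (if n - n' = 0 then (2:ℝ) else if (n - n').natAbs = 1 then -1 else 0) := by
  set m := n - n' with hm
  have keyR : ∀ θ : ℝ, Real.cos (((n:ℝ) - (n':ℝ)) * θ) * (1 - Real.cos θ)
      = Real.cos ((m:ℝ) * θ) - (Real.cos (((m+1:ℤ):ℝ) * θ) + Real.cos (((m-1:ℤ):ℝ) * θ)) / 2 := by
    intro θ
    push_cast [hm]
    rw [show ((n:ℝ) - n' + 1) * θ = ((n:ℝ) - n') * θ + θ by ring,
      show ((n:ℝ) - n' - 1) * θ = ((n:ℝ) - n') * θ - θ by ring, Real.cos_add, Real.cos_sub]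
    ring
  have hint : ∀ k : ℤ, IntervalIntegrable (fun θ : ℝ => Real.cos ((k:ℝ) * θ))
      MeasureTheory.volume 0 (2 * Real.pi) := by
    intro k
    exact (by fun_prop : Continuous fun θ : ℝ => Real.cos ((k:ℝ) * θ)).intervalIntegrable _ _
  simp only [keyR]
  rw [intervalIntegral.integral_sub (hint m) (((hint (m+1)).add (hint (m-1))).div_const 2),
    intervalIntegral.integral_div, intervalIntegral.integral_add (hint (m+1)) (hint (m-1)),
    Klem, Klem, Klem]
  have hπ : Real.pi ≠ 0 := Real.pi_ne_zero
  rcases lt_trichotomy m 0 with h | h | h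
  · rcases eq_or_lt_of_le (show m ≤ -1 by omega) with h1 | h1
    · rw [h1]; norm_num
    · have h0 : m ≠ 0 := by omega
      have h2 : m + 1 ≠ 0 := by omega
      have h3 : m - 1 ≠ 0 := by omega
      have h4 : m.natAbs ≠ 1 := by omega
      simp [h0, h2, h3, h4]
  · simp [h]; field_simp
  · rcases eq_or_lt_of_le (show 1 ≤ m by omega) with h1 | h1
    · rw [← h1]; norm_num
    · have h0 : m ≠ 0 := by omega
      have h2 : m + 1 ≠ 0 := by omega
      have h3 : m - 1 ≠ 0 := by omega
      have h4 : m.natAbs ≠ 1 := by omega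
      simp [h0, h2, h3, h4]

/-- The real part of the complex covariance integral appearing in the second limit
theorem equals `(1/π) ∫₀^{2π} cos((n-n')θ)(1-cos θ) dθ`, independently of `β`; in
particular it equals `2` if `n = n'`, `-1` if `|n - n'| = 1`, and `0` if `|n - n'| ≥ 2`. -/
theorem covariance_complex_integral (n n' : ℤ) (β : ℝ) :
    (∫ s in (0:ℝ)..1,
        (Complex.exp (2 * Complex.I * (((n : ℂ) + 1) * Real.pi - (β : ℂ)) * (s : ℂ))
          - Complex.exp (2 * Complex.I * ((n : ℂ) * Real.pi - (β : ℂ)) * (s : ℂ)))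
        * (Complex.exp (-2 * Complex.I * (((n' : ℂ) + 1) * Real.pi - (β : ℂ)) * (s : ℂ))
          - Complex.exp (-2 * Complex.I * ((n' : ℂ) * Real.pi - (β : ℂ)) * (s : ℂ)))).re
      = (1 / Real.pi) * ∫ θ in (0:ℝ)..(2 * Real.pi),
          Real.cos ((n - n') * θ) * (1 - Real.cos θ) ∧
    (n = n' →
      (∫ s in (0:ℝ)..1,
        (Complex.exp (2 * Complex.I * (((n : ℂ) + 1) * Real.pi - (β : ℂ)) * (s : ℂ))
          - Complex.exp (2 * Complex.I * ((n : ℂ) * Real.pi - (β : ℂ)) * (s : ℂ)))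
        * (Complex.exp (-2 * Complex.I * (((n' : ℂ) + 1) * Real.pi - (β : ℂ)) * (s : ℂ))
          - Complex.exp (-2 * Complex.I * ((n' : ℂ) * Real.pi - (β : ℂ)) * (s : ℂ)))).re = 2) ∧
    (|n - n'| = 1 →
      (∫ s in (0:ℝ)..1,
        (Complex.exp (2 * Complex.I * (((n : ℂ) + 1) * Real.pi - (β : ℂ)) * (s : ℂ))
          - Complex.exp (2 * Complex.I * ((n : ℂ) * Real.pi - (β : ℂ)) * (s : ℂ)))
        * (Complex.exp (-2 * Complex.I * (((n' : ℂ) + 1) * Real.pi - (β : ℂ)) * (s : ℂ))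
          - Complex.exp (-2 * Complex.I * ((n' : ℂ) * Real.pi - (β : ℂ)) * (s : ℂ)))).re = -1) ∧
    (2 ≤ |n - n'| →
      (∫ s in (0:ℝ)..1,
        (Complex.exp (2 * Complex.I * (((n : ℂ) + 1) * Real.pi - (β : ℂ)) * (s : ℂ))
          - Complex.exp (2 * Complex.I * ((n : ℂ) * Real.pi - (β : ℂ)) * (s : ℂ)))
        * (Complex.exp (-2 * Complex.I * (((n' : ℂ) + 1) * Real.pi - (β : ℂ)) * (s : ℂ))
          - Complex.exp (-2 * Complex.I * ((n' : ℂ) * Real.pi - (β : ℂ)) * (s : ℂ)))).re = 0) := by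
  have hL := LHS_eq n n' β
  have hR := RHS_eq n n'
  refine ⟨hL.trans hR.symm, ?_, ?_, ?_⟩
  · intro h
    rw [hL, if_pos (by omega)]
  · intro h
    have h1 : (n - n').natAbs = 1 := by
      have := Int.abs_eq_natAbs (n - n'); omega
    have h0 : n - n' ≠ 0 := by omega
    rw [hL, if_neg h0, if_pos h1]
  · intro h
    have := Int.abs_eq_natAbs (n - n')
    have h0 : n - n' ≠ 0 := by omega
    have h1 : (n - n').natAbs ≠ 1 := by omega
    rw [hL, if_neg h0, if_neg h1]
end

section
/- Let T > 0, C ∈ ℂ, and let f : [0,T] → ℝ and g, ρ : [0,T] → ℂ be continuous. Suppose ρ satisfies the Volterra integral equation ρ(t) = 1 + C·∫₀ᵗ f(u)·ρ(u) du + g(t) for all t ∈ [0,T]. Then for all t ∈ [0,T], ρ(t) = 1 + C·∫₀ᵗ (f(s) + f(s)·g(s))·exp(C·∫ₛᵗ f(u) du) ds + g(t); equivalently, ρ(t) = exp(C·∫₀ᵗ f(u) du) + C·∫₀ᵗ f(s)·g(s)·exp(C·∫ₛᵗ f(u) du) ds + g(t). -/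
open Set intervalIntegral

private lemma aux_ftc {E : Type*} [NormedAddCommGroup E] [NormedSpace ℝ E] [CompleteSpace E]
    {T : ℝ} {φ : ℝ → E} (hφ : ContinuousOn φ (Set.Icc 0 T))
    {x : ℝ} (hx : x ∈ Set.Icc (0:ℝ) T) :
    HasDerivWithinAt (fun y => ∫ u in (0:ℝ)..y, φ u) (φ x) (Set.Icc 0 T) x := by
  haveI : Fact (x ∈ Set.Icc (0:ℝ) T) := ⟨hx⟩
  have hsub : Set.uIcc (0:ℝ) x ⊆ Set.Icc 0 T := by
    rw [Set.uIcc_of_le hx.1]; exact Set.Icc_subset_Icc le_rfl hx.2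
  exact intervalIntegral.integral_hasDerivWithinAt_right
    ((hφ.mono hsub).intervalIntegrable)
    (hφ.stronglyMeasurableAtFilter_nhdsWithin measurableSet_Icc x)
    (hφ x hx)

private lemma aux_const {T : ℝ} {h : ℝ → ℂ}
    (hd : ∀ x ∈ Set.Icc (0:ℝ) T, HasDerivWithinAt h 0 (Set.Icc 0 T) x) :
    ∀ t ∈ Set.Icc (0:ℝ) T, h t = h 0 := by
  refine constant_of_has_deriv_right_zero (fun x hx => (hd x hx).continuousWithinAt) ?_
  intro x hx
  exact (hd x (Set.Ico_subset_Icc_self hx)).mono_of_mem_nhdsWithin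
    (Icc_mem_nhdsGE_of_mem hx)

/-- Variation-of-constants representation for a linear Volterra integral equation:
if `ρ(t) = 1 + C ∫₀ᵗ f ρ + g(t)` on `[0, T]` with continuous data, then
`ρ(t) = 1 + C ∫₀ᵗ (f + f g)(s) exp(C ∫ₛᵗ f) ds + g(t)`, equivalently
`ρ(t) = exp(C ∫₀ᵗ f) + C ∫₀ᵗ f(s) g(s) exp(C ∫ₛᵗ f) ds + g(t)`. -/
theorem volterra_variation_of_constants
    (T : ℝ) (hT : 0 < T) (C : ℂ)
    (f : ℝ → ℝ) (g ρ : ℝ → ℂ)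
    (hf : ContinuousOn f (Set.Icc 0 T))
    (hg : ContinuousOn g (Set.Icc 0 T))
    (hρ : ContinuousOn ρ (Set.Icc 0 T))
    (heq : ∀ t ∈ Set.Icc (0:ℝ) T,
      ρ t = 1 + C * (∫ u in (0:ℝ)..t, (f u : ℂ) * ρ u) + g t) :
    ∀ t ∈ Set.Icc (0:ℝ) T,
      ρ t = 1 + C * (∫ s in (0:ℝ)..t,
          ((f s : ℂ) + (f s : ℂ) * g s) * Complex.exp (C * ((∫ u in s..t, f u : ℝ) : ℂ)))
        + g t ∧
      ρ t = Complex.exp (C * ((∫ u in (0:ℝ)..t, f u : ℝ) : ℂ))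
        + C * (∫ s in (0:ℝ)..t,
            (f s : ℂ) * g s * Complex.exp (C * ((∫ u in s..t, f u : ℝ) : ℂ)))
        + g t := by
  -- notation
  set F : ℝ → ℝ := fun x => ∫ u in (0:ℝ)..x, f u with hFdef
  set Ex : ℝ → ℂ := fun x => Complex.exp (-C * F x) with hExdef
  have hsub : ∀ x ∈ Set.Icc (0:ℝ) T, Set.uIcc (0:ℝ) x ⊆ Set.Icc 0 T := by
    intro x hx; rw [Set.uIcc_of_le hx.1]; exact Set.Icc_subset_Icc le_rfl hx.2
  -- derivatives of F and its complex lift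
  have hFd : ∀ x ∈ Set.Icc (0:ℝ) T, HasDerivWithinAt F (f x) (Set.Icc 0 T) x :=
    fun x hx => aux_ftc hf hx
  have hFC : ∀ x ∈ Set.Icc (0:ℝ) T,
      HasDerivWithinAt (fun y => (F y : ℂ)) ((f x : ℂ)) (Set.Icc 0 T) x := by
    intro x hx
    exact (hFd x hx).ofReal_comp
  have hEd : ∀ x ∈ Set.Icc (0:ℝ) T,
      HasDerivWithinAt Ex (-C * f x * Ex x) (Set.Icc 0 T) x := by
    intro x hx
    have := ((hFC x hx).const_mul (-C)).cexp
    simpa [hExdef, mul_comm] using this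
  have hEc : ContinuousOn Ex (Set.Icc 0 T) := fun x hx => (hEd x hx).continuousWithinAt
  -- continuous integrands
  have hfC : ContinuousOn (fun u => (f u : ℂ)) (Set.Icc 0 T) :=
    Complex.continuous_ofReal.comp_continuousOn hf
  have hfρ : ContinuousOn (fun u => (f u : ℂ) * ρ u) (Set.Icc 0 T) := hfC.mul hρ
  have hfE : ContinuousOn (fun s => (f s : ℂ) * Ex s) (Set.Icc 0 T) := hfC.mul hEc
  have hfgE : ContinuousOn (fun s => (f s : ℂ) * g s * Ex s) (Set.Icc 0 T) :=
    (hfC.mul hg).mul hEc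
  set y : ℝ → ℂ := fun x => ∫ u in (0:ℝ)..x, (f u : ℂ) * ρ u with hydef
  set A : ℝ → ℂ := fun x => ∫ s in (0:ℝ)..x, (f s : ℂ) * Ex s with hAdef
  set B : ℝ → ℂ := fun x => ∫ s in (0:ℝ)..x, (f s : ℂ) * g s * Ex s with hBdef
  have hyd : ∀ x ∈ Set.Icc (0:ℝ) T,
      HasDerivWithinAt y ((f x : ℂ) * ρ x) (Set.Icc 0 T) x := fun x hx => aux_ftc hfρ hx
  have hAd : ∀ x ∈ Set.Icc (0:ℝ) T,
      HasDerivWithinAt A ((f x : ℂ) * Ex x) (Set.Icc 0 T) x := fun x hx => aux_ftc hfE hx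
  have hBd : ∀ x ∈ Set.Icc (0:ℝ) T,
      HasDerivWithinAt B ((f x : ℂ) * g x * Ex x) (Set.Icc 0 T) x :=
    fun x hx => aux_ftc hfgE hx
  have hF0 : F 0 = 0 := intervalIntegral.integral_same
  have hy0 : y 0 = 0 := intervalIntegral.integral_same
  have hA0 : A 0 = 0 := intervalIntegral.integral_same
  have hB0 : B 0 = 0 := intervalIntegral.integral_same
  -- Fact I : y t * Ex t = A t + B t
  have factI : ∀ t ∈ Set.Icc (0:ℝ) T, y t * Ex t = A t + B t := by
    have := aux_const (T := T) (h := fun x => y x * Ex x - (A x + B x)) ?_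
    · intro t ht
      have h0 := this t ht
      simp only [hy0, hA0, hB0, zero_mul, add_zero, sub_zero, zero_sub, zero_add] at h0
      linear_combination h0
    · intro x hx
      have hd := (((hyd x hx).mul (hEd x hx)).sub ((hAd x hx).add (hBd x hx)))
      have hρx := heq x hx
      refine hd.congr_deriv ?_
      rw [hρx]; ring
  -- Fact II : Ex t = 1 - C * A t
  have factII : ∀ t ∈ Set.Icc (0:ℝ) T, Ex t = 1 - C * A t := by
    have := aux_const (T := T) (h := fun x => Ex x + C * A x) ?_
    · intro t ht
      have h0 := this t ht
      simp only [hA0, mul_zero, add_zero, hExdef, hF0, Complex.ofReal_zero, mul_zero,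
        Complex.exp_zero] at h0
      linear_combination h0
    · intro x hx
      have hd := (hEd x hx).add ((hAd x hx).const_mul C)
      refine hd.congr_deriv ?_
      ring
  -- now fix t
  intro t ht
  have hρt := heq t ht
  have hyt := factI t ht
  have hEt := factII t ht
  -- rewriting the exponential inside integrals
  have hexp : ∀ s ∈ Set.uIcc (0:ℝ) t,
      Complex.exp (C * ((∫ u in s..t, f u : ℝ) : ℂ)) = Complex.exp (C * F t) * Ex s := by
    intro s hs
    have hsI : s ∈ Set.Icc (0:ℝ) T := hsub t ht hs
    have hint : F t - F s = ∫ u in s..t, f u :=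
      intervalIntegral.integral_interval_sub_left
        ((hf.mono (hsub t ht)).intervalIntegrable)
        ((hf.mono (hsub s hsI)).intervalIntegrable)
    rw [← hint, hExdef]
    push_cast
    rw [← Complex.exp_add]
    congr 1
    ring
  -- integrability over 0..t
  have hI1 : IntervalIntegrable (fun s => (f s : ℂ) * Ex s) MeasureTheory.volume 0 t :=
    (hfE.mono (hsub t ht)).intervalIntegrable
  have hI2 : IntervalIntegrable (fun s => (f s : ℂ) * g s * Ex s) MeasureTheory.volume 0 t :=
    (hfgE.mono (hsub t ht)).intervalIntegrable
  -- first integral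
  have hint1 : (∫ s in (0:ℝ)..t,
      ((f s : ℂ) + (f s : ℂ) * g s) * Complex.exp (C * ((∫ u in s..t, f u : ℝ) : ℂ)))
      = Complex.exp (C * F t) * (A t + B t) := by
    rw [show (∫ s in (0:ℝ)..t,
        ((f s : ℂ) + (f s : ℂ) * g s) * Complex.exp (C * ((∫ u in s..t, f u : ℝ) : ℂ)))
        = ∫ s in (0:ℝ)..t, Complex.exp (C * F t) * ((f s : ℂ) * Ex s + (f s : ℂ) * g s * Ex s)
      from intervalIntegral.integral_congr (fun s hs => by rw [hexp s hs]; ring)]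
    rw [intervalIntegral.integral_const_mul, intervalIntegral.integral_add hI1 hI2]
  have hint2 : (∫ s in (0:ℝ)..t,
      (f s : ℂ) * g s * Complex.exp (C * ((∫ u in s..t, f u : ℝ) : ℂ)))
      = Complex.exp (C * F t) * B t := by
    rw [show (∫ s in (0:ℝ)..t,
        (f s : ℂ) * g s * Complex.exp (C * ((∫ u in s..t, f u : ℝ) : ℂ)))
        = ∫ s in (0:ℝ)..t, Complex.exp (C * F t) * ((f s : ℂ) * g s * Ex s)
      from intervalIntegral.integral_congr (fun s hs => by rw [hexp s hs]; ring)]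
    rw [intervalIntegral.integral_const_mul]
  have hEe : Ex t * Complex.exp (C * (F t : ℂ)) = 1 := by
    rw [hExdef, ← Complex.exp_add, show -C * (F t : ℂ) + C * F t = 0 by ring, Complex.exp_zero]
  have hiy : (∫ u in (0:ℝ)..t, (f u : ℂ) * ρ u) = y t := rfl
  have hiF : (∫ u in (0:ℝ)..t, f u) = F t := rfl
  have hyE : Complex.exp (C * (F t : ℂ)) * (A t + B t) = y t := by
    rw [← hyt]; linear_combination (y t) * hEe
  have hE1 : Complex.exp (C * ((F t : ℝ) : ℂ)) = 1 + C * (Complex.exp (C * ((F t : ℝ) : ℂ)) * A t) := by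
    rw [hEt] at hEe; linear_combination hEe
  constructor
  · rw [hint1, hρt, hiy, hyE]
  · rw [hint2, hρt, hiy, hiF]
    linear_combination (-C) * hyE - hE1
end
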